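/- Let f ∈ H¹(a,b). Then there exist constants C₁, C₂ > 0 depending only on b - a such that ‖f‖_{L^∞(a,b)} ≤ C₁ ‖f'‖_{L²(a,b)}^{2/3} ‖f‖_{L¹(a,b)}^{1/3} + C₂ ‖f‖_{L¹(a,b)}. -/

import Mathlib

open MeasureTheory

-- pointwise AM-GM
lemma ptwise (ε t : ℝ) (hε : 0 < ε) : |t| ≤ (ε * t ^ 2 + 1 / ε) / 2 := by
  rw [le_div_iff₀ (by norm_num : (0:ℝ) < 2), ← mul_le_mul_iff_of_pos_right hε, add_mul,
    div_mul_cancel₀ _ hε.ne']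
  rw [← sq_abs t]
  nlinarith [sq_nonneg (ε * |t| - 1)]

-- Cauchy–Schwarz via AM-GM
lemma cs (c d : ℝ) (hcd : c < d) (g : ℝ → ℝ)
    (hg : IntegrableOn g (Set.Icc c d))
    (hg2 : IntegrableOn (fun x => g x ^ 2) (Set.Icc c d))
    (A : ℝ) (hA0 : 0 ≤ A) (hA : ∫ y in Set.Icc c d, g y ^ 2 ≤ A) :
    ∫ y in Set.Icc c d, |g y| ≤ Real.sqrt (d - c) * Real.sqrt A := by
  have hL : (0:ℝ) < d - c := by linarith
  have key : ∀ ε : ℝ, 0 < ε → ∫ y in Set.Icc c d, |g y| ≤ (ε * A + (d - c) / ε) / 2 := by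
    intro ε hε
    have h1 : ∫ y in Set.Icc c d, |g y| ≤ ∫ y in Set.Icc c d, (ε * g y ^ 2 + 1 / ε) / 2 := by
      apply setIntegral_mono_on hg.abs
      · exact (((hg2.const_mul ε).add (integrableOn_const (by simp [Real.volume_Icc]))).div_const 2)
      · exact measurableSet_Icc
      · intro y _; exact ptwise ε (g y) hε
    have h2 : ∫ y in Set.Icc c d, (ε * g y ^ 2 + 1 / ε) / 2
        = (ε * (∫ y in Set.Icc c d, g y ^ 2) + (d - c) * (1 / ε)) / 2 := by
      rw [integral_div, integral_add (hg2.const_mul ε)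
        (integrableOn_const (by simp [Real.volume_Icc])),
        integral_const_mul, setIntegral_const]
      simp [Real.volume_real_Icc_of_le hL.le, Real.volume_Icc, ENNReal.toReal_ofReal hL.le, smul_eq_mul, hcd.le]
    rw [h2] at h1
    have : ε * ∫ y in Set.Icc c d, g y ^ 2 ≤ ε * A := by
      exact mul_le_mul_of_nonneg_left hA hε.le
    calc ∫ y in Set.Icc c d, |g y| ≤ _ := h1
      _ ≤ (ε * A + (d - c) / ε) / 2 := by rw [mul_one_div]; linarith
  rcases eq_or_lt_of_le hA0 with hA0' | hApos
  · -- A = 0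
    rw [← hA0', Real.sqrt_zero, mul_zero]
    by_contra h
    push_neg at h
    set X := ∫ y in Set.Icc c d, |g y|
    have hX : 0 < X := h
    have := key ((d - c) / X) (by positivity)
    rw [← hA0'] at this
    have he : (d - c) / ((d - c) / X) = X := by field_simp
    rw [mul_zero, zero_add, he] at this
    linarith
  · -- A > 0
    set ε := Real.sqrt ((d - c) / A) with hεdef
    have hε : 0 < ε := Real.sqrt_pos.2 (by positivity)
    have h := key ε hε
    have hε2 : ε ^ 2 = (d - c) / A := Real.sq_sqrt (by positivity)
    have hsL : Real.sqrt (d - c) ^ 2 = d - c := Real.sq_sqrt hL.le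
    have hsA : Real.sqrt A ^ 2 = A := Real.sq_sqrt hA0
    have heq : (ε * A + (d - c) / ε) / 2 = Real.sqrt (d - c) * Real.sqrt A := by
      have hsL0 : 0 < Real.sqrt (d - c) := Real.sqrt_pos.2 hL
      have hsA0 : 0 < Real.sqrt A := Real.sqrt_pos.2 hApos
      have hεeq : ε = Real.sqrt (d - c) / Real.sqrt A := by
        rw [hεdef, Real.sqrt_div hL.le]
      rw [hεeq]
      field_simp
      nlinarith [hsL, hsA]
    linarith [heq ▸ h]

lemma key (a b : ℝ) (hab : a < b) (f f' : ℝ → ℝ)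
    (hf : ContinuousOn f (Set.Icc a b))
    (hint : IntegrableOn f' (Set.Icc a b))
    (hFTC : ∀ x ∈ Set.Icc a b, f x = f a + ∫ t in a..x, f' t)
    (x : ℝ) (hx : x ∈ Set.Icc a b)
    (ℓ : ℝ) (hℓ0 : 0 < ℓ) (hℓ : ℓ ≤ b - a) :
    |f x| ≤ (∫ y in a..b, |f y|) / ℓ
      + ∫ y in Set.Icc (min x (b - ℓ)) (min x (b - ℓ) + ℓ), |f' y| := by
  set c := min x (b - ℓ) with hc
  have hca : a ≤ c := le_min hx.1 (by linarith)
  have hcb : c + ℓ ≤ b := by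
    have := min_le_right x (b - ℓ); linarith
  have hsub : Set.Icc c (c + ℓ) ⊆ Set.Icc a b :=
    Set.Icc_subset_Icc hca hcb
  have hxI : x ∈ Set.Icc c (c + ℓ) := by
    constructor
    · exact min_le_left x (b - ℓ)
    · rcases le_or_gt x (b - ℓ) with h | h
      · have : c = x := min_eq_left h; linarith [this ▸ le_refl x]
      · have : c = b - ℓ := min_eq_right h.le
        rw [this]; linarith [hx.2]
  -- min of |f| on the subinterval
  obtain ⟨y, hyI, hy⟩ := isCompact_Icc.exists_isMinOn (Set.nonempty_Icc.2 (by linarith))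
    ((hf.mono hsub).abs)
  have hyab : y ∈ Set.Icc a b := hsub hyI
  -- integrability of |f|
  have hfi : IntegrableOn (fun t => |f t|) (Set.Icc a b) :=
    (hf.abs).integrableOn_Icc
  -- averaging
  have havg : ℓ * |f y| ≤ ∫ t in a..b, |f t| := by
    have h1 : ∫ t in Set.Icc c (c + ℓ), |f y| ≤ ∫ t in Set.Icc c (c + ℓ), |f t| := by
      apply setIntegral_mono_on (integrableOn_const (by simp [Real.volume_Icc]))
        (hfi.mono_set hsub) measurableSet_Icc
      intro z hz; exact hy hz
    rw [setIntegral_const, Real.volume_real_Icc_of_le (by linarith : c ≤ c + ℓ), smul_eq_mul] at h1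
    have h2 : ∫ t in Set.Icc c (c + ℓ), |f t| ≤ ∫ t in Set.Icc a b, |f t| := by
      apply setIntegral_mono_set hfi
      · exact Filter.Eventually.of_forall fun z => abs_nonneg _
      · exact hsub.eventuallyLE
    rw [intervalIntegral.integral_of_le hab.le, ← integral_Icc_eq_integral_Ioc]
    calc ℓ * |f y| = (c + ℓ - c) * |f y| := by ring_nf
      _ ≤ _ := by linarith
  -- FTC bound
  have hdiff : |f x| ≤ |f y| + ∫ t in Set.Icc c (c + ℓ), |f' t| := by
    have hii : ∀ z ∈ Set.Icc a b, IntervalIntegrable f' volume a z := by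
      intro z hz
      apply IntegrableOn.intervalIntegrable
      rw [Set.uIcc_of_le hz.1]
      exact hint.mono_set (Set.Icc_subset_Icc le_rfl hz.2)
    have hfd : f x - f y = ∫ t in y..x, f' t := by
      rw [hFTC x hx, hFTC y hyab, add_sub_add_left_eq_sub,
        intervalIntegral.integral_interval_sub_left (hii x hx) (hii y hyab)]
    have hfi' : IntegrableOn (fun t => |f' t|) (Set.Icc c (c + ℓ)) :=
      (hint.mono_set hsub).abs
    have habs : |∫ t in y..x, f' t| ≤ ∫ t in Set.Icc c (c + ℓ), |f' t| := by
      have hmono : ∀ u v : ℝ, u ≤ v → u ∈ Set.Icc c (c + ℓ) → v ∈ Set.Icc c (c + ℓ) →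
          |∫ t in u..v, f' t| ≤ ∫ t in Set.Icc c (c + ℓ), |f' t| := by
        intro u v huv hu hv
        calc |∫ t in u..v, f' t| ≤ ∫ t in u..v, |f' t| :=
              intervalIntegral.abs_integral_le_integral_abs huv
          _ = ∫ t in Set.Ioc u v, |f' t| := intervalIntegral.integral_of_le huv
          _ ≤ ∫ t in Set.Icc c (c + ℓ), |f' t| := by
              apply setIntegral_mono_set hfi'
                (Filter.Eventually.of_forall fun z => abs_nonneg _)
              exact ((Set.Ioc_subset_Icc_self.trans
                (Set.Icc_subset_Icc hu.1 hv.2))).eventuallyLE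
      rcases le_total y x with h | h
      · exact hmono y x h hyI hxI
      · rw [intervalIntegral.integral_symm, abs_neg]
        exact hmono x y h hxI hyI
    calc |f x| = |f y + (f x - f y)| := by ring_nf
      _ ≤ |f y| + |f x - f y| := abs_add_le _ _
      _ ≤ |f y| + ∫ t in Set.Icc c (c + ℓ), |f' t| := by rw [hfd]; linarith [habs]
  calc |f x| ≤ |f y| + ∫ t in Set.Icc c (c + ℓ), |f' t| := hdiff
    _ ≤ (∫ t in a..b, |f t|) / ℓ + ∫ t in Set.Icc c (c + ℓ), |f' t| := by
        have : |f y| ≤ (∫ t in a..b, |f t|) / ℓ := by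
          rw [le_div_iff₀ hℓ0]; linarith [havg]
        linarith

lemma master (a b : ℝ) (hab : a < b) (f f' : ℝ → ℝ)
    (hf : ContinuousOn f (Set.Icc a b))
    (hint : IntegrableOn f' (Set.Icc a b))
    (hint2 : IntegrableOn (fun x => (f' x) ^ 2) (Set.Icc a b))
    (hFTC : ∀ x ∈ Set.Icc a b, f x = f a + ∫ t in a..x, f' t)
    (x : ℝ) (hx : x ∈ Set.Icc a b)
    (ℓ : ℝ) (hℓ0 : 0 < ℓ) (hℓ : ℓ ≤ b - a) :
    |f x| ≤ (∫ y in a..b, |f y|) / ℓ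
      + Real.sqrt ℓ * Real.sqrt (∫ y in a..b, (f' y) ^ 2) := by
  have hA0 : (0:ℝ) ≤ ∫ y in a..b, (f' y) ^ 2 :=
    intervalIntegral.integral_nonneg hab.le (fun u _ => sq_nonneg _)
  have hkey := key a b hab f f' hf hint hFTC x hx ℓ hℓ0 hℓ
  set c := min x (b - ℓ) with hc
  have hca : a ≤ c := le_min hx.1 (by linarith)
  have hcb : c + ℓ ≤ b := by have := min_le_right x (b - ℓ); linarith
  have hsub : Set.Icc c (c + ℓ) ⊆ Set.Icc a b := Set.Icc_subset_Icc hca hcb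
  have hAsub : ∫ y in Set.Icc c (c + ℓ), (f' y) ^ 2 ≤ ∫ y in a..b, (f' y) ^ 2 := by
    rw [intervalIntegral.integral_of_le hab.le, ← integral_Icc_eq_integral_Ioc]
    exact setIntegral_mono_set hint2
      (Filter.Eventually.of_forall fun z => sq_nonneg _) hsub.eventuallyLE
  have hcs := cs c (c + ℓ) (by linarith) f' (hint.mono_set hsub) (hint2.mono_set hsub)
    (∫ y in a..b, (f' y) ^ 2) hA0 hAsub
  rw [add_sub_cancel_left] at hcs
  linarith

theorem stmt_11 (a b : ℝ) (hab : a < b) :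
    ∃ C₁ > (0 : ℝ), ∃ C₂ > (0 : ℝ), ∀ f f' : ℝ → ℝ,
      ContinuousOn f (Set.Icc a b) →
      IntegrableOn f' (Set.Icc a b) →
      IntegrableOn (fun x => (f' x) ^ 2) (Set.Icc a b) →
      (∀ x ∈ Set.Icc a b, f x = f a + ∫ t in a..x, f' t) →
      ∀ x ∈ Set.Icc a b,
        |f x| ≤ C₁ * ((∫ y in a..b, (f' y) ^ 2) ^ ((1 : ℝ) / 2)) ^ ((2 : ℝ) / 3) *
            (∫ y in a..b, |f y|) ^ ((1 : ℝ) / 3) +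
          C₂ * ∫ y in a..b, |f y| := by
  refine ⟨2, by norm_num, 2 / (b - a), div_pos (by norm_num) (by linarith), ?_⟩
  intro f f' hf hint hint2 hFTC x hx
  set A := ∫ y in a..b, (f' y) ^ 2 with hAdef
  set B := ∫ y in a..b, |f y| with hBdef
  have hA0 : (0:ℝ) ≤ A :=
    intervalIntegral.integral_nonneg hab.le (fun u _ => sq_nonneg _)
  have hB0 : (0:ℝ) ≤ B :=
    intervalIntegral.integral_nonneg hab.le (fun u _ => abs_nonneg _)
  set S := Real.sqrt A with hSdef
  have hS0 : 0 ≤ S := Real.sqrt_nonneg _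
  have hSr : A ^ ((1:ℝ)/2) = S := (Real.sqrt_eq_rpow A).symm
  have hm : ∀ ℓ : ℝ, 0 < ℓ → ℓ ≤ b - a → |f x| ≤ B / ℓ + Real.sqrt ℓ * S :=
    fun ℓ h1 h2 => master a b hab f f' hf hint hint2 hFTC x hx ℓ h1 h2
  rw [hSr]
  have hba : (0:ℝ) < b - a := by linarith
  rcases eq_or_lt_of_le hB0 with hB | hB
  · -- B = 0
    have hfx : |f x| ≤ 0 := by
      by_contra h
      push_neg at h
      set ε := |f x| / 2 with hε
      have hε0 : 0 < ε := by positivity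
      set ℓ := min (b - a) ((ε / (S + 1)) ^ 2) with hℓ
      have hℓ0 : 0 < ℓ := lt_min hba (pow_pos (div_pos hε0 (by linarith)) 2)
      have h1 := hm ℓ hℓ0 (min_le_left _ _)
      rw [← hB, zero_div, zero_add] at h1
      have h2 : Real.sqrt ℓ ≤ ε / (S + 1) := by
        calc Real.sqrt ℓ ≤ Real.sqrt ((ε / (S + 1)) ^ 2) :=
            Real.sqrt_le_sqrt (min_le_right _ _)
          _ = ε / (S + 1) := Real.sqrt_sq (by positivity)
      have h3 : Real.sqrt ℓ * S ≤ ε := by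
        calc Real.sqrt ℓ * S ≤ ε / (S + 1) * S :=
            mul_le_mul_of_nonneg_right h2 hS0
          _ ≤ ε := by
            rw [div_mul_eq_mul_div, div_le_iff₀ (by positivity)]
            nlinarith
      have : |f x| ≤ ε := le_trans h1 h3
      rw [hε] at this
      linarith
    have hrhs : (0:ℝ) ≤ 2 * S ^ ((2:ℝ)/3) * B ^ ((1:ℝ)/3) + 2 / (b - a) * B :=
      add_nonneg (mul_nonneg (mul_nonneg (by norm_num) (Real.rpow_nonneg hS0 _))
        (Real.rpow_nonneg hB0 _)) (mul_nonneg (div_nonneg (by norm_num) hba.le) hB0)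
    linarith
  · rcases eq_or_lt_of_le hS0 with hS | hS
    · -- S = 0
      have h1 := hm (b - a) hba le_rfl
      rw [← hS, mul_zero, add_zero] at h1
      have h2 : (0:ℝ) ≤ 2 * S ^ ((2:ℝ)/3) * B ^ ((1:ℝ)/3) :=
        mul_nonneg (mul_nonneg (by norm_num) (Real.rpow_nonneg hS0 _))
          (Real.rpow_nonneg hB0 _)
      have h3 : B / (b - a) ≤ 2 / (b - a) * B := by
        rw [div_mul_eq_mul_div, two_mul, add_div]
        have := div_nonneg hB0 hba.le
        linarith
      linarith
    · -- S > 0, B > 0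
      set u := B ^ ((1:ℝ)/3) with hu
      set v := S ^ ((1:ℝ)/3) with hv
      have hu0 : 0 < u := Real.rpow_pos_of_pos hB _
      have hv0 : 0 < v := Real.rpow_pos_of_pos hS _
      have hB3 : u ^ (3:ℕ) = B := by
        rw [hu, ← Real.rpow_natCast (B ^ ((1:ℝ)/3)) 3, ← Real.rpow_mul hB0]
        norm_num
      have hS3 : v ^ (3:ℕ) = S := by
        rw [hv, ← Real.rpow_natCast (S ^ ((1:ℝ)/3)) 3, ← Real.rpow_mul hS0]
        norm_num
      have hS23 : S ^ ((2:ℝ)/3) = v ^ (2:ℕ) := by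
        rw [hv, ← Real.rpow_natCast (S ^ ((1:ℝ)/3)) 2, ← Real.rpow_mul hS0]
        norm_num
      set L := (B / S) ^ ((2:ℝ)/3) with hL
      have hL0 : 0 < L := Real.rpow_pos_of_pos (by positivity) _
      have hLeq : L = u ^ (2:ℕ) / v ^ (2:ℕ) := by
        rw [hL, Real.div_rpow hB0 hS0,
          hu, hv, ← Real.rpow_natCast (B ^ ((1:ℝ)/3)) 2, ← Real.rpow_mul hB0,
          ← Real.rpow_natCast (S ^ ((1:ℝ)/3)) 2, ← Real.rpow_mul hS0]
        norm_num
      rcases le_or_gt L (b - a) with hcase | hcase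
      · have h1 := hm L hL0 hcase
        have hsq : Real.sqrt L = u / v := by
          rw [hLeq, ← div_pow, Real.sqrt_sq (by positivity)]
        have heq : B / L + Real.sqrt L * S = 2 * v ^ (2:ℕ) * u := by
          rw [hsq, hLeq, ← hB3, ← hS3]
          field_simp
          ring
        rw [heq] at h1
        have h2 : (0:ℝ) ≤ 2 / (b - a) * B := by positivity
        rw [hS23]
        linarith
      · have h1 := hm (b - a) hba le_rfl
        set w := Real.sqrt (b - a) with hw
        have hw0 : 0 < w := Real.sqrt_pos.2 hba
        have hw2 : w ^ (2:ℕ) = b - a := Real.sq_sqrt hba.le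
        have hstep : w ^ (3:ℕ) < B / S := by
          have h2 : (b - a) ^ ((3:ℝ)/2) < ((B / S) ^ ((2:ℝ)/3)) ^ ((3:ℝ)/2) :=
            Real.rpow_lt_rpow hba.le hcase (by norm_num)
          rw [← Real.rpow_mul (by positivity)] at h2
          norm_num at h2
          have h3 : (b - a) ^ ((3:ℝ)/2) = w ^ (3:ℕ) := by
            rw [hw, Real.sqrt_eq_rpow, ← Real.rpow_natCast ((b-a) ^ ((1:ℝ)/2)) 3,
              ← Real.rpow_mul hba.le]
            norm_num
          rw [h3] at h2
          exact h2
        have h4 : w * S ≤ B / (b - a) := by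
          rw [le_div_iff₀ hba, ← hw2]
          rw [lt_div_iff₀ hS] at hstep
          nlinarith
        have h5 : (0:ℝ) ≤ 2 * S ^ ((2:ℝ)/3) * B ^ ((1:ℝ)/3) :=
          mul_nonneg (mul_nonneg (by norm_num) (Real.rpow_nonneg hS0 _))
            (Real.rpow_nonneg hB0 _)
        have h6 : B / (b - a) + w * S ≤ 2 / (b - a) * B := by
          rw [div_mul_eq_mul_div, two_mul, add_div]
          linarith
        linarith
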